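/- For every set X ⊆ ℤ² and every positive integer c, the grid graph induced by the c-scaling X^c is connected if and only if the grid graph induced by X is connected. -/

import Mathlib

/-- The `c`-scaling of a set `X ⊆ ℤ²`:
`X^c = {(a,b) : (⌊a/c⌋, ⌊b/c⌋) ∈ X}` (floor division). -/
def scaling (X : Set (ℤ × ℤ)) (c : ℕ) : Set (ℤ × ℤ) :=
  {p | (Int.fdiv p.1 (c : ℤ), Int.fdiv p.2 (c : ℤ)) ∈ X}

/-- The grid graph induced by `Y ⊆ ℤ²`: vertices are the points of `Y` and edges
connect exactly those pairs of points at `ℓ¹`-distance 1. -/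
def gridGraph (Y : Set (ℤ × ℤ)) : SimpleGraph Y where
  Adj p q := |p.1.1 - q.1.1| + |p.1.2 - q.1.2| = 1
  symm := by
    constructor
    intro p q h
    rw [abs_sub_comm, abs_sub_comm (q.1.2)]
    exact h
  loopless := by
    constructor
    intro p h
    simp at h

section helpers

/-- characterization of fdiv values -/
lemma fdiv_eq_iff_aux {c : ℤ} (hc : 0 < c) (a x : ℤ) : a.fdiv c = x ↔ c * x ≤ a ∧ a < c * x + c := by
  rw [Int.fdiv_eq_ediv_of_nonneg _ hc.le]
  constructor
  · rintro rfl
    refine ⟨by rw [mul_comm]; exact Int.ediv_mul_le a hc.ne', ?_⟩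
    nlinarith [Int.lt_ediv_add_one_mul_self a hc]
  · rintro ⟨h1, h2⟩
    have hle : x ≤ a / c := (Int.le_ediv_iff_mul_le hc).2 (by nlinarith)
    have hlt : a / c < x + 1 := (Int.ediv_lt_iff_lt_mul hc).2 (by nlinarith)
    omega

/-- fdiv is constant on values between two with equal fdiv -/
lemma fdiv_between {c : ℤ} (hc : 0 < c) (a a' b : ℤ) (h : a.fdiv c = a'.fdiv c)
    (hb : (a ≤ b ∧ b ≤ a') ∨ (a' ≤ b ∧ b ≤ a)) : b.fdiv c = a.fdiv c := by
  set x := a.fdiv c with hx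
  have ha : c * x ≤ a ∧ a < c * x + c := (fdiv_eq_iff_aux hc a x).1 hx.symm
  have ha' : c * x ≤ a' ∧ a' < c * x + c := (fdiv_eq_iff_aux hc a' x).1 h.symm
  exact (fdiv_eq_iff_aux hc b x).2 ⟨by omega, by omega⟩

lemma fdiv_succ {c : ℤ} (hc : 0 < c) (a : ℤ) : (a + 1).fdiv c = a.fdiv c ∨ (a + 1).fdiv c = a.fdiv c + 1 := by
  set x := a.fdiv c with hx
  have ha : c * x ≤ a ∧ a < c * x + c := (fdiv_eq_iff_aux hc a x).1 hx.symm
  rcases lt_or_ge (a + 1) (c * x + c) with h | h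
  · exact Or.inl ((fdiv_eq_iff_aux hc _ x).2 ⟨by omega, h⟩)
  · refine Or.inr ((fdiv_eq_iff_aux hc _ (x + 1)).2 ⟨?_, ?_⟩)
    · have : c * (x + 1) = c * x + c := by ring
      omega
    · have : c * (x + 1) + c = c * x + c + c := by ring
      omega

lemma fdiv_mul_add {c : ℤ} (hc : 0 < c) (x r : ℤ) (hr1 : 0 ≤ r) (hr2 : r < c) : (c * x + r).fdiv c = x :=
  (fdiv_eq_iff_aux hc _ x).2 ⟨by omega, by omega⟩

lemma fdiv_mul {c : ℤ} (hc : 0 < c) (x : ℤ) : (c * x).fdiv c = x := by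
  have := fdiv_mul_add hc x 0 le_rfl hc
  rwa [add_zero] at this

end helpers

/-- walking along the first coordinate within a set -/
lemma horiz_reach (Y : Set (ℤ × ℤ)) (b : ℤ) :
    ∀ (n : ℕ) (a a' : ℤ), (a' - a).natAbs = n →
      ∀ (hsub : ∀ t : ℤ, (a ≤ t ∧ t ≤ a') ∨ (a' ≤ t ∧ t ≤ a) → (t, b) ∈ Y),
      (gridGraph Y).Reachable ⟨(a, b), hsub a (by omega)⟩ ⟨(a', b), hsub a' (by omega)⟩ := by
  intro n
  induction n with
  | zero =>
    intro a a' hn hsub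
    have : a = a' := by omega
    subst this
    exact SimpleGraph.Reachable.refl _
  | succ n ih =>
    intro a a' hn hsub
    set a₁ : ℤ := if a < a' then a + 1 else a - 1 with ha₁
    have hsub' : ∀ t : ℤ, (a₁ ≤ t ∧ t ≤ a') ∨ (a' ≤ t ∧ t ≤ a₁) → (t, b) ∈ Y := by
      intro t ht
      apply hsub
      simp only [ha₁] at ht; split at ht <;> omega
    have hadj : (gridGraph Y).Adj ⟨(a, b), hsub a (by omega)⟩
        ⟨(a₁, b), hsub' a₁ (by omega)⟩ := by
      show |a - a₁| + |b - b| = 1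
      have : a - a₁ = -1 ∨ a - a₁ = 1 := by simp only [ha₁]; split <;> omega
      rcases this with h | h <;> rw [h] <;> simp
    have hrest := ih a₁ a' (by simp only [ha₁]; split <;> omega) hsub'
    exact (hadj.reachable).trans hrest

/-- walking along the second coordinate within a set -/
lemma vert_reach (Y : Set (ℤ × ℤ)) (a : ℤ) :
    ∀ (n : ℕ) (b b' : ℤ), (b' - b).natAbs = n →
      ∀ (hsub : ∀ t : ℤ, (b ≤ t ∧ t ≤ b') ∨ (b' ≤ t ∧ t ≤ b) → (a, t) ∈ Y),
      (gridGraph Y).Reachable ⟨(a, b), hsub b (by omega)⟩ ⟨(a, b'), hsub b' (by omega)⟩ := by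
  intro n
  induction n with
  | zero =>
    intro b b' hn hsub
    have : b = b' := by omega
    subst this
    exact SimpleGraph.Reachable.refl _
  | succ n ih =>
    intro b b' hn hsub
    set b₁ : ℤ := if b < b' then b + 1 else b - 1 with hb₁
    have hsub' : ∀ t : ℤ, (b₁ ≤ t ∧ t ≤ b') ∨ (b' ≤ t ∧ t ≤ b₁) → (a, t) ∈ Y := by
      intro t ht
      apply hsub
      simp only [hb₁] at ht; split at ht <;> omega
    have hadj : (gridGraph Y).Adj ⟨(a, b), hsub b (by omega)⟩
        ⟨(a, b₁), hsub' b₁ (by omega)⟩ := by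
      show |a - a| + |b - b₁| = 1
      have : b - b₁ = -1 ∨ b - b₁ = 1 := by simp only [hb₁]; split <;> omega
      rcases this with h | h <;> rw [h] <;> simp
    have hrest := ih b₁ b' (by simp only [hb₁]; split <;> omega) hsub'
    exact (hadj.reachable).trans hrest

/-- The grid graph induced by `X^c` is connected iff the grid graph induced by `X` is. -/
theorem gridGraph_scaling_connected_iff (X : Set (ℤ × ℤ)) (c : ℕ) (hc : 0 < c) :
    (gridGraph (scaling X c)).Connected ↔ (gridGraph X).Connected := by
  have hcz : (0 : ℤ) < (c : ℤ) := by exact_mod_cast hc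
  set Y : Set (ℤ × ℤ) := scaling X c with hY
  have memX : ∀ p : ℤ × ℤ, p ∈ Y → (p.1.fdiv c, p.2.fdiv c) ∈ X := fun p hp => hp
  have liftmem : ∀ x : ℤ × ℤ, x ∈ X → ((c : ℤ) * x.1, (c : ℤ) * x.2) ∈ Y := by
    intro x hx
    show ((((c : ℤ) * x.1).fdiv c), (((c : ℤ) * x.2).fdiv c)) ∈ X
    rw [fdiv_mul hcz, fdiv_mul hcz]
    exact hx
  constructor
  · -- scaling connected → X connected
    intro hconn
    obtain ⟨p⟩ := hconn.nonempty
    have hreach := hconn.preconnected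
    have hne : Nonempty X := ⟨⟨_, memX p.1 p.2⟩⟩
    haveI := hne
    refine ⟨fun x y => ?_⟩
    have hx : ((c : ℤ) * x.1.1, (c : ℤ) * x.1.2) ∈ Y := liftmem x.1 x.2
    have hyy : ((c : ℤ) * y.1.1, (c : ℤ) * y.1.2) ∈ Y := liftmem y.1 y.2
    have hr := hreach ⟨_, hx⟩ ⟨_, hyy⟩
    have proj : ∀ (p q : Y), (gridGraph Y).Reachable p q →
        (gridGraph X).Reachable ⟨(p.1.1.fdiv c, p.1.2.fdiv c), memX p.1 p.2⟩
          ⟨(q.1.1.fdiv c, q.1.2.fdiv c), memX q.1 q.2⟩ := by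
      intro p q hpq
      obtain ⟨w⟩ := hpq
      induction w with
      | nil => exact SimpleGraph.Reachable.refl _
      | @cons u v _ h w ih =>
        refine SimpleGraph.Reachable.trans ?_ ih
        have hadj : |u.1.1 - v.1.1| + |u.1.2 - v.1.2| = 1 := h
        have hcase : (u.1.1 = v.1.1 ∧ (u.1.2 = v.1.2 + 1 ∨ v.1.2 = u.1.2 + 1)) ∨
            (u.1.2 = v.1.2 ∧ (u.1.1 = v.1.1 + 1 ∨ v.1.1 = u.1.1 + 1)) := by
          rcases abs_cases (u.1.1 - v.1.1) with ⟨e1, _⟩ | ⟨e1, _⟩ <;>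
          rcases abs_cases (u.1.2 - v.1.2) with ⟨e2, _⟩ | ⟨e2, _⟩ <;> omega
        have hd1 : u.1.1.fdiv c = v.1.1.fdiv c ∨ (u.1.1.fdiv c - v.1.1.fdiv c).natAbs = 1 := by
          rcases hcase with ⟨h1, _⟩ | ⟨_, h1 | h1⟩
          · left; rw [h1]
          · rw [h1]; rcases fdiv_succ hcz v.1.1 with h' | h' <;> rw [h'] <;> omega
          · rw [h1]; rcases fdiv_succ hcz u.1.1 with h' | h' <;> rw [h'] <;> omega
        have hd2 : u.1.2.fdiv c = v.1.2.fdiv c ∨ (u.1.2.fdiv c - v.1.2.fdiv c).natAbs = 1 := by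
          rcases hcase with ⟨_, h1 | h1⟩ | ⟨h1, _⟩
          · rw [h1]; rcases fdiv_succ hcz v.1.2 with h' | h' <;> rw [h'] <;> omega
          · rw [h1]; rcases fdiv_succ hcz u.1.2 with h' | h' <;> rw [h'] <;> omega
          · left; rw [h1]
        rcases hcase with ⟨he, _⟩ | ⟨he, _⟩
        · have hf1 : u.1.1.fdiv c = v.1.1.fdiv c := by rw [he]
          rcases hd2 with he2 | he2
          · have heq : (⟨(u.1.1.fdiv c, u.1.2.fdiv c), memX u.1 u.2⟩ : X) =
                ⟨(v.1.1.fdiv c, v.1.2.fdiv c), memX v.1 v.2⟩ :=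
              Subtype.ext (congrArg₂ Prod.mk hf1 he2)
            exact heq ▸ SimpleGraph.Reachable.refl _
          · refine SimpleGraph.Adj.reachable ?_
            show |u.1.1.fdiv c - v.1.1.fdiv c| + |u.1.2.fdiv c - v.1.2.fdiv c| = 1
            rw [hf1]
            simp only [sub_self, abs_zero, zero_add]
            rw [Int.abs_eq_natAbs]
            omega
        · have hf2 : u.1.2.fdiv c = v.1.2.fdiv c := by rw [he]
          rcases hd1 with he1 | he1
          · have heq : (⟨(u.1.1.fdiv c, u.1.2.fdiv c), memX u.1 u.2⟩ : X) =
                ⟨(v.1.1.fdiv c, v.1.2.fdiv c), memX v.1 v.2⟩ :=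
              Subtype.ext (congrArg₂ Prod.mk he1 hf2)
            exact heq ▸ SimpleGraph.Reachable.refl _
          · refine SimpleGraph.Adj.reachable ?_
            show |u.1.1.fdiv c - v.1.1.fdiv c| + |u.1.2.fdiv c - v.1.2.fdiv c| = 1
            rw [hf2]
            simp only [sub_self, abs_zero, add_zero]
            rw [Int.abs_eq_natAbs]
            omega
    have := proj _ _ hr
    have hx1 : (((c : ℤ) * x.1.1).fdiv c, ((c : ℤ) * x.1.2).fdiv c) = x.1 := by
      rw [fdiv_mul hcz, fdiv_mul hcz]
    have hy1 : (((c : ℤ) * y.1.1).fdiv c, ((c : ℤ) * y.1.2).fdiv c) = y.1 := by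
      rw [fdiv_mul hcz, fdiv_mul hcz]
    convert this using 2 <;> [exact hx1.symm; exact hy1.symm]
  · -- X connected → scaling connected
    intro hconn
    obtain ⟨x⟩ := hconn.nonempty
    have hreach := hconn.preconnected
    have hne : Nonempty Y := ⟨⟨_, liftmem x.1 x.2⟩⟩
    -- within a block reachability
    have block : ∀ (p q : Y), p.1.1.fdiv c = q.1.1.fdiv c → p.1.2.fdiv c = q.1.2.fdiv c →
        (gridGraph Y).Reachable p q := by
      rintro ⟨⟨a, b⟩, hp⟩ ⟨⟨a', b'⟩, hq⟩ h1 h2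
      simp only at h1 h2
      have hpX : (a.fdiv c, b.fdiv c) ∈ X := hp
      have hsub1 : ∀ t : ℤ, (a ≤ t ∧ t ≤ a') ∨ (a' ≤ t ∧ t ≤ a) → (t, b) ∈ Y := by
        intro t ht
        show (t.fdiv c, b.fdiv c) ∈ X
        rw [fdiv_between hcz a a' t h1 ht]
        exact hpX
      have r1 := horiz_reach Y b (a' - a).natAbs a a' rfl hsub1
      have hsub2 : ∀ t : ℤ, (b ≤ t ∧ t ≤ b') ∨ (b' ≤ t ∧ t ≤ b) → ((a' : ℤ), t) ∈ Y := by
        intro t ht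
        show ((a' : ℤ).fdiv c, t.fdiv c) ∈ X
        rw [fdiv_between hcz b b' t h2 ht, ← h1]
        exact hpX
      have r2 := vert_reach Y a' (b' - b).natAbs b b' rfl hsub2
      have e1 : (⟨(a, b), hp⟩ : Y) = ⟨(a, b), hsub1 a (by omega)⟩ := rfl
      have e2 : (⟨(a', b), hsub1 a' (by omega)⟩ : Y) = ⟨(a', b), hsub2 b (by omega)⟩ := rfl
      have e3 : (⟨(a', b'), hsub2 b' (by omega)⟩ : Y) = ⟨(a', b'), hq⟩ := rfl
      rw [e1]
      exact (r1.trans (e2 ▸ r2)).trans (e3 ▸ SimpleGraph.Reachable.refl _)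
    -- representatives for an edge of X
    have reps : ∀ u v : ℤ × ℤ, u ∈ X → v ∈ X → |u.1 - v.1| + |u.2 - v.2| = 1 →
        ∃ (p' q' : ℤ × ℤ) (hp' : p' ∈ Y) (hq' : q' ∈ Y),
          (p'.1.fdiv c, p'.2.fdiv c) = u ∧ (q'.1.fdiv c, q'.2.fdiv c) = v ∧
          (gridGraph Y).Adj ⟨p', hp'⟩ ⟨q', hq'⟩ := by
      have key : ∀ u v : ℤ × ℤ, u ∈ X → v ∈ X →
          ((v.1 = u.1 + 1 ∧ v.2 = u.2) ∨ (v.1 = u.1 ∧ v.2 = u.2 + 1)) →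
          ∃ (p' q' : ℤ × ℤ) (hp' : p' ∈ Y) (hq' : q' ∈ Y),
            (p'.1.fdiv c, p'.2.fdiv c) = u ∧ (q'.1.fdiv c, q'.2.fdiv c) = v ∧
            (gridGraph Y).Adj ⟨p', hp'⟩ ⟨q', hq'⟩ := by
        rintro u v hu hv (⟨h1, h2⟩ | ⟨h1, h2⟩)
        · refine ⟨((c : ℤ) * u.1 + (c - 1), (c : ℤ) * u.2),
            ((c : ℤ) * u.1 + c, (c : ℤ) * u.2), ?_, ?_, ?_, ?_, ?_⟩
          · show ((((c:ℤ) * u.1 + (c - 1)).fdiv c), (((c:ℤ) * u.2).fdiv c)) ∈ X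
            rw [fdiv_mul_add hcz u.1 (c - 1) (by omega) (by omega), fdiv_mul hcz]
            exact hu
          · show ((((c:ℤ) * u.1 + c).fdiv c), (((c:ℤ) * u.2).fdiv c)) ∈ X
            have : (c : ℤ) * u.1 + c = c * (u.1 + 1) := by ring
            rw [this, fdiv_mul hcz, fdiv_mul hcz, ← h1, ← h2]
            exact hv
          · simp only [fdiv_mul_add hcz u.1 (c - 1) (by omega) (by omega), fdiv_mul hcz]
          · have : (c : ℤ) * u.1 + c = c * (u.1 + 1) := by ring
            simp only [this, fdiv_mul hcz, ← h1, ← h2]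
          · show |((c:ℤ) * u.1 + (c - 1)) - ((c:ℤ) * u.1 + c)| + |(c:ℤ) * u.2 - (c:ℤ) * u.2| = 1
            have e : ((c:ℤ) * u.1 + (c - 1)) - ((c:ℤ) * u.1 + c) = -1 := by ring
            rw [e]; simp
        · refine ⟨((c : ℤ) * u.1, (c : ℤ) * u.2 + (c - 1)),
            ((c : ℤ) * u.1, (c : ℤ) * u.2 + c), ?_, ?_, ?_, ?_, ?_⟩
          · show ((((c:ℤ) * u.1).fdiv c), (((c:ℤ) * u.2 + (c - 1)).fdiv c)) ∈ X
            rw [fdiv_mul_add hcz u.2 (c - 1) (by omega) (by omega), fdiv_mul hcz]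
            exact hu
          · show ((((c:ℤ) * u.1).fdiv c), (((c:ℤ) * u.2 + c).fdiv c)) ∈ X
            have : (c : ℤ) * u.2 + c = c * (u.2 + 1) := by ring
            rw [this, fdiv_mul hcz, fdiv_mul hcz, ← h1, ← h2]
            exact hv
          · simp only [fdiv_mul_add hcz u.2 (c - 1) (by omega) (by omega), fdiv_mul hcz]
          · have : (c : ℤ) * u.2 + c = c * (u.2 + 1) := by ring
            simp only [this, fdiv_mul hcz, ← h1, ← h2]
          · show |(c:ℤ) * u.1 - (c:ℤ) * u.1| + |((c:ℤ) * u.2 + (c - 1)) - ((c:ℤ) * u.2 + c)| = 1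
            have e : ((c:ℤ) * u.2 + (c - 1)) - ((c:ℤ) * u.2 + c) = -1 := by ring
            rw [e]; simp
      intro u v hu hv hadj
      have hcase : (v.1 = u.1 + 1 ∧ v.2 = u.2) ∨ (v.1 = u.1 ∧ v.2 = u.2 + 1) ∨
          (u.1 = v.1 + 1 ∧ u.2 = v.2) ∨ (u.1 = v.1 ∧ u.2 = v.2 + 1) := by
        rcases abs_cases (u.1 - v.1) with ⟨e1, _⟩ | ⟨e1, _⟩ <;>
        rcases abs_cases (u.2 - v.2) with ⟨e2, _⟩ | ⟨e2, _⟩ <;> omega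
      rcases hcase with h | h | h | h
      · exact key u v hu hv (Or.inl h)
      · exact key u v hu hv (Or.inr h)
      · obtain ⟨p', q', hp', hq', e1, e2, hA⟩ := key v u hv hu (Or.inl h)
        exact ⟨q', p', hq', hp', e2, e1, hA.symm⟩
      · obtain ⟨p', q', hp', hq', e1, e2, hA⟩ := key v u hv hu (Or.inr h)
        exact ⟨q', p', hq', hp', e2, e1, hA.symm⟩
    -- lift reachability
    have lift : ∀ (u v : X) (w : (gridGraph X).Walk u v) (p q : Y),
        (p.1.1.fdiv c, p.1.2.fdiv c) = u.1 → (q.1.1.fdiv c, q.1.2.fdiv c) = v.1 →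
        (gridGraph Y).Reachable p q := by
      intro u v w
      induction w with
      | nil =>
        intro p q hp hq
        apply block
        · have := hp.trans hq.symm
          exact congrArg Prod.fst this
        · have := hp.trans hq.symm
          exact congrArg Prod.snd this
      | @cons u m v h w ih =>
        intro p q hp hq
        have hadj : |u.1.1 - m.1.1| + |u.1.2 - m.1.2| = 1 := h
        obtain ⟨p', q', hp', hq', e1, e2, hA⟩ := reps u.1 m.1 u.2 m.2 hadj
        have r1 : (gridGraph Y).Reachable p ⟨p', hp'⟩ := by
          apply block
          · exact congrArg Prod.fst (hp.trans e1.symm)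
          · exact congrArg Prod.snd (hp.trans e1.symm)
        have r3 : (gridGraph Y).Reachable ⟨q', hq'⟩ q := ih ⟨q', hq'⟩ q e2 hq
        exact (r1.trans hA.reachable).trans r3
    haveI := hne
    refine ⟨fun p q => ?_⟩
    obtain ⟨w⟩ := hreach ⟨_, memX p.1 p.2⟩ ⟨_, memX q.1 q.2⟩
    exact lift _ _ w p q rfl rfl
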